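/- Let F be the free group on a set S, let g' ≥ 1, and let α_1, β_1, …, α_{g'}, β_{g'} be 2g' pairwise distinct elements of S. Then the element [α_1,β_1][α_2,β_2]⋯[α_{g'},β_{g'}] does not lie in the third term γ_3(F) of the lower central series of F; in particular it is not the identity. -/

import Mathlib

open scoped commutatorElement

/-- Discrete Heisenberg group as a structure. -/
structure Heis where
  a : ℤ
  b : ℤ
  c : ℤ

namespace Heis

@[ext] theorem ext' {x y : Heis} (ha : x.a = y.a) (hb : x.b = y.b) (hc : x.c = y.c) :
    x = y := by cases x; cases y; simp_all

instance : Mul Heis := ⟨fun x y => ⟨x.a + y.a, x.b + y.b, x.c + y.c + x.a * y.b⟩⟩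
instance : One Heis := ⟨⟨0, 0, 0⟩⟩
instance : Inv Heis := ⟨fun x => ⟨-x.a, -x.b, -x.c + x.a * x.b⟩⟩

@[simp] theorem mul_a (x y : Heis) : (x * y).a = x.a + y.a := rfl
@[simp] theorem mul_b (x y : Heis) : (x * y).b = x.b + y.b := rfl
@[simp] theorem mul_c (x y : Heis) : (x * y).c = x.c + y.c + x.a * y.b := rfl
@[simp] theorem one_a : (1 : Heis).a = 0 := rfl
@[simp] theorem one_b : (1 : Heis).b = 0 := rfl
@[simp] theorem one_c : (1 : Heis).c = 0 := rfl
@[simp] theorem inv_a (x : Heis) : x⁻¹.a = -x.a := rfl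
@[simp] theorem inv_b (x : Heis) : x⁻¹.b = -x.b := rfl
@[simp] theorem inv_c (x : Heis) : x⁻¹.c = -x.c + x.a * x.b := rfl

instance : Group Heis where
  mul_assoc x y z := by ext <;> simp <;> ring
  one_mul x := by ext <;> simp
  mul_one x := by ext <;> simp
  inv_mul_cancel x := by ext <;> simp <;> ring

/-- Every commutator in `Heis` is central. -/
theorem commutator_mem_center (x y : Heis) : ⁅x, y⁆ ∈ Subgroup.center Heis := by
  rw [Subgroup.mem_center_iff]
  intro z
  have ha : ⁅x, y⁆.a = 0 := by simp [commutatorElement_def]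
  have hb : ⁅x, y⁆.b = 0 := by simp [commutatorElement_def]
  ext <;> simp [ha, hb] <;> ring

theorem lcs2_eq_bot : (⊤ : Subgroup Heis).lowerCentralSeries 2 = ⊥ := by
  rw [eq_bot_iff]
  show ⁅(⊤ : Subgroup Heis).lowerCentralSeries 1, ⊤⁆ ≤ ⊥
  have h1 : (⊤ : Subgroup Heis).lowerCentralSeries 1 ≤ Subgroup.center Heis := by
    show ⁅(⊤ : Subgroup Heis), ⊤⁆ ≤ _
    exact Subgroup.commutator_le.mpr fun x _ y _ => commutator_mem_center x y
  refine Subgroup.commutator_le.mpr fun g hg z _ => ?_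
  have := (Subgroup.mem_center_iff.mp (h1 hg)) z
  simp [commutatorElement_def, Subgroup.mem_bot]
  rw [← this]; group

theorem XY_comm : ⁅(⟨1,0,0⟩ : Heis), (⟨0,1,0⟩ : Heis)⁆ = ⟨0,0,1⟩ := by
  ext <;> simp [commutatorElement_def]

end Heis

/-- Let `F` be the free group on a set `S`, let `g' ≥ 1`, and let
`α_1, β_1, …, α_{g'}, β_{g'}` be `2g'` pairwise distinct elements of `S` (encoded by the
injectivity of `Sum.elim α β`).  Then `[α_1,β_1][α_2,β_2]⋯[α_{g'},β_{g'}]` does not lie in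
the third term `γ_3(F)` of the lower central series (Mathlib's `lowerCentralSeries F 2`);
in particular it is not the identity. -/
theorem commutator_product_not_in_gamma3_free {S : Type*} (g' : ℕ) (hg' : 1 ≤ g')
    (α β : Fin g' → S) (hdist : Function.Injective (Sum.elim α β)) :
    (List.ofFn (fun i : Fin g' =>
        ⁅FreeGroup.of (α i), FreeGroup.of (β i)⁆)).prod
      ∉ (⊤ : Subgroup (FreeGroup S)).lowerCentralSeries 2 := by
  classical
  obtain ⟨n, rfl⟩ : ∃ n, g' = n + 1 := ⟨g' - 1, (Nat.succ_pred_eq_of_pos hg').symm⟩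
  set X : Heis := ⟨1,0,0⟩
  set Y : Heis := ⟨0,1,0⟩
  set f : FreeGroup S →* Heis := FreeGroup.lift
    (fun s => if s = α 0 then X else if s = β 0 then Y else 1) with hf
  intro hmem
  have hab : ∀ i j, α i ≠ β j := fun i j h => by
    have := hdist (a₁ := Sum.inl i) (a₂ := Sum.inr j) (by simpa using h)
    simp at this
  have hfa : ∀ i : Fin (n+1), f (FreeGroup.of (α i)) = if i = 0 then X else 1 := by
    intro i
    simp only [hf, FreeGroup.lift_apply_of]
    by_cases h : i = 0
    · simp [h]
    · have : α i ≠ α 0 := fun hc => h (by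
        have := hdist (a₁ := Sum.inl i) (a₂ := Sum.inl 0) (by simpa using hc)
        simpa using this)
      simp [this, hab i 0, h]
  have hfb : ∀ i : Fin (n+1), f (FreeGroup.of (β i)) = if i = 0 then Y else 1 := by
    intro i
    simp only [hf, FreeGroup.lift_apply_of]
    have h1 : β i ≠ α 0 := fun hc => hab 0 i hc.symm
    by_cases h : i = 0
    · simp only [h, if_pos rfl]
      rw [if_neg (fun hc => hab 0 0 hc.symm)]
    · have h2 : β i ≠ β 0 := fun hc => h (by
        have := hdist (a₁ := Sum.inr i) (a₂ := Sum.inr 0) (by simpa using hc)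
        simpa using this)
      simp [h1, h2, h]
  have hprod : f (List.ofFn (fun i : Fin (n+1) =>
      ⁅FreeGroup.of (α i), FreeGroup.of (β i)⁆)).prod = ⁅X, Y⁆ := by
    rw [map_list_prod]
    have : (List.ofFn fun i : Fin (n+1) => ⁅FreeGroup.of (α i), FreeGroup.of (β i)⁆).map f
        = List.ofFn (fun i : Fin (n+1) => if i = 0 then ⁅X, Y⁆ else 1) := by
      rw [List.map_ofFn]
      congr 1
      funext i
      simp only [Function.comp, map_commutatorElement, hfa, hfb]
      by_cases h : i = 0 <;> simp [h]
    rw [this, List.ofFn_succ]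
    simp only [if_pos rfl]
    have : (List.ofFn fun i : Fin n => if i.succ = 0 then ⁅X, Y⁆ else 1).prod = 1 := by
      apply List.prod_eq_one
      intro x hx
      simp only [List.mem_ofFn] at hx
      obtain ⟨i, rfl⟩ := hx
      simp [Fin.succ_ne_zero]
    simp [this]
  have hin : f (List.ofFn (fun i : Fin (n+1) =>
      ⁅FreeGroup.of (α i), FreeGroup.of (β i)⁆)).prod ∈ (⊤ : Subgroup Heis).lowerCentralSeries 2 :=
    Subgroup.lowerCentralSeries.map f 2 ⟨_, hmem, rfl⟩
  rw [Heis.lcs2_eq_bot, Subgroup.mem_bot, hprod, Heis.XY_comm] at hin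
  simpa using congrArg Heis.c hin
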